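/- For a bijection f : ℤ → ℤ the following are equivalent: (1) there is a uniform bound N with |f(i) − i| < N for all i ∈ ℤ; (2) the collection of states {st(f,t) : t ∈ ℤ} is a finite set of subsets of ℤ. Moreover, if these equivalent conditions hold, then f is a juggling function. -/
import Mathlib


/-- A (virtual) juggling state: a subset of ℤ whose symmetric difference with
`{i : ℤ | i ≤ 0}` is finite. -/
def IsJugglingState (S : Set ℤ) : Prop := (symmDiff S {i : ℤ | i ≤ 0}).Finite

/-- A (virtual) juggling function: a bijection f : ℤ → ℤ such that f(ℤ_{≤0}) is a
juggling state. -/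
def IsJugglingFunction (f : ℤ → ℤ) : Prop :=
  Function.Bijective f ∧ IsJugglingState (f '' {i : ℤ | i ≤ 0})

/-- The state of `f` at time `t`: st(f,t) = {f(i) − t : i ≤ t}. -/
def st (f : ℤ → ℤ) (t : ℤ) : Set ℤ := (fun i => f i - t) '' {i : ℤ | i ≤ t}

lemma mem_st {f : ℤ → ℤ} {t x : ℤ} : x ∈ st f t ↔ ∃ i, i ≤ t ∧ f i - t = x := by
  simp [st]

lemma key_lemma (f : ℤ → ℤ) (hf : Function.Bijective f) {a b : ℤ} (hab : a < b)
    (hst : st f a = st f b) : ∃ m M : ℤ, Set.Iic m ⊆ st f a ∧ st f a ⊆ Set.Iic M := by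
  classical
  set d : ℤ := b - a with hd
  have hd0 : 0 < d := by omega
  have hdown : ∀ y ∈ st f a, y - d ∈ st f a := by
    intro y hy
    obtain ⟨i, hi, rfl⟩ := mem_st.mp hy
    rw [hst]
    exact mem_st.mpr ⟨i, by omega, by omega⟩
  have hiter : ∀ (k : ℕ), ∀ y ∈ st f a, y - (k : ℤ) * d ∈ st f a := by
    intro k
    induction k with
    | zero => intro y hy; simpa using hy
    | succ k ih =>
      intro y hy
      have h2 := ih (y - d) (hdown y hy)
      have he : y - ((k : ℕ) + 1 : ℕ) * d = y - d - (k : ℤ) * d := by push_cast; ring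
      rw [he]
      exact h2
  have hdvd_down : ∀ y ∈ st f a, ∀ x : ℤ, x ≤ y → d ∣ y - x → x ∈ st f a := by
    intro y hy x hxy hdvd
    obtain ⟨c, hc⟩ := hdvd
    have hc0 : 0 ≤ c := by
      by_contra h
      push_neg at h
      have := mul_neg_of_pos_of_neg hd0 h
      linarith
    have hx : x = y - (c.toNat : ℤ) * d := by
      rw [Int.toNat_of_nonneg hc0]
      have := mul_comm d c
      linarith
    rw [hx]
    exact hiter c.toNat y hy
  set T : Finset ℤ := (Finset.Ioc a b).image (fun i => f i - b) with hT
  have hTne : T.Nonempty := Finset.Nonempty.image (Finset.nonempty_Ioc.mpr hab) _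
  have hmemT : ∀ y, y ∈ T ↔ ∃ i, a < i ∧ i ≤ b ∧ f i - b = y := by
    intro y
    simp [hT, Finset.mem_image, Finset.mem_Ioc, and_assoc]
  have hT_in : ∀ y ∈ T, y ∈ st f a := by
    intro y hy
    obtain ⟨i, hi1, hi2, rfl⟩ := (hmemT y).mp hy
    rw [hst]
    exact mem_st.mpr ⟨i, hi2, rfl⟩
  have hT_top : ∀ y ∈ T, y + d ∉ st f a := by
    intro y hy hmem
    obtain ⟨i, hi1, hi2, rfl⟩ := (hmemT y).mp hy
    obtain ⟨j, hj, hje⟩ := mem_st.mp hmem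
    have hfij : f j = f i := by omega
    have := hf.injective hfij
    omega
  have htop_le : ∀ y ∈ T, ∀ z ∈ st f a, d ∣ z - y → z ≤ y := by
    intro y hy z hz hdvd
    by_contra h
    push_neg at h
    have hdl : d ≤ z - y := Int.le_of_dvd (by omega) hdvd
    have hdvd2 : d ∣ z - (y + d) := by
      have he : z - (y + d) = (z - y) - d := by ring
      rw [he]
      exact dvd_sub hdvd dvd_rfl
    have : y + d ∈ st f a := hdvd_down z hz (y + d) (by omega) hdvd2
    exact hT_top y hy this
  set n : ℕ := d.toNat with hn
  have hnd : (n : ℤ) = d := Int.toNat_of_nonneg hd0.le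
  haveI : NeZero n := ⟨by omega⟩
  have hinj : Set.InjOn (fun i => ((f i - b : ℤ) : ZMod n)) (Finset.Ioc a b) := by
    intro i hi j hj hij
    simp only [Finset.coe_Ioc, Set.mem_Ioc] at hi hj
    have h2 : (n : ℤ) ∣ (f j - b) - (f i - b) :=
      ((ZMod.intCast_eq_intCast_iff _ _ _).mp hij).dvd
    rw [hnd] at h2
    have hyi : f i - b ∈ T := (hmemT _).mpr ⟨i, hi.1, hi.2, rfl⟩
    have hyj : f j - b ∈ T := (hmemT _).mpr ⟨j, hj.1, hj.2, rfl⟩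
    have l1 : f j - b ≤ f i - b := htop_le _ hyi _ (hT_in _ hyj) h2
    have l2 : f i - b ≤ f j - b := htop_le _ hyj _ (hT_in _ hyi) (by
      have he : f i - b - (f j - b) = -((f j - b) - (f i - b)) := by ring
      rw [he]
      exact dvd_neg.mpr h2)
    exact hf.injective (by omega)
  have hcard : ((Finset.Ioc a b).image (fun i => ((f i - b : ℤ) : ZMod n))).card = n := by
    rw [Finset.card_image_of_injOn hinj, Int.card_Ioc]
  have huniv : (Finset.Ioc a b).image (fun i => ((f i - b : ℤ) : ZMod n)) = Finset.univ :=
    Finset.eq_univ_of_card _ (by rw [hcard, ZMod.card])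
  have hsurj : ∀ x : ℤ, ∃ y ∈ T, d ∣ x - y := by
    intro x
    have hx : ((x : ℤ) : ZMod n) ∈ Finset.univ := Finset.mem_univ _
    rw [← huniv] at hx
    obtain ⟨i, hi, hie⟩ := Finset.mem_image.mp hx
    rw [Finset.mem_Ioc] at hi
    refine ⟨f i - b, (hmemT _).mpr ⟨i, hi.1, hi.2, rfl⟩, ?_⟩
    have := ((ZMod.intCast_eq_intCast_iff _ _ _).mp hie).dvd
    rwa [hnd] at this
  refine ⟨T.min' hTne, T.max' hTne, ?_, ?_⟩
  · intro x hx
    simp only [Set.mem_Iic] at hx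
    obtain ⟨y, hyT, hdvd⟩ := hsurj x
    have hxy : x ≤ y := le_trans hx (T.min'_le y hyT)
    refine hdvd_down y (hT_in y hyT) x hxy ?_
    have he : y - x = -(x - y) := by ring
    rw [he]
    exact dvd_neg.mpr hdvd
  · intro z hz
    obtain ⟨y, hyT, hdvd⟩ := hsurj z
    exact le_trans (htop_le y hyT z hz hdvd) (T.le_max' y hyT)

lemma per_t (f : ℤ → ℤ) (hf : Function.Bijective f)
    (hfin : (Set.range (st f)).Finite) (t : ℤ) :
    ∃ B : ℤ, Set.Iic (-B) ⊆ st f t ∧ st f t ⊆ Set.Iic B := by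
  classical
  have hpig : ∃ k l : ℕ, k < l ∧ st f (t + k) = st f (t + l) := by
    have hni : ¬ Function.Injective (fun k : ℕ => st f (t + k)) := by
      intro hinj
      exact (Set.infinite_range_of_injective hinj)
        (hfin.subset (by rintro S ⟨k, rfl⟩; exact ⟨t + k, rfl⟩))
    rw [Function.not_injective_iff] at hni
    obtain ⟨k, l, he, hne⟩ := hni
    rcases lt_or_gt_of_ne hne with h | h
    · exact ⟨k, l, h, he⟩
    · exact ⟨l, k, h, he.symm⟩
  obtain ⟨k, l, hkl, hkle⟩ := hpig
  have hab : (t + k : ℤ) < t + l := by omega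
  obtain ⟨m, M, hm, hM⟩ := key_lemma f hf hab hkle
  set a : ℤ := t + k with ha
  have hta : t ≤ a := by omega
  have hup : st f t ⊆ Set.Iic (M + (a - t)) := by
    intro x hx
    obtain ⟨i, hi, rfl⟩ := mem_st.mp hx
    have h1 : f i - a ∈ st f a := mem_st.mpr ⟨i, by omega, rfl⟩
    have h2 := hM h1
    simp only [Set.mem_Iic] at h2 ⊢
    omega
  set G : Finset ℤ := (Finset.Ioc t a).image (fun i => f i - a) with hG
  set μ : ℤ := (insert m G).min' (Finset.insert_nonempty _ _) with hμ
  have hμm : μ ≤ m := Finset.min'_le _ _ (Finset.mem_insert_self _ _)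
  have hlow : Set.Iic (μ - 1 + (a - t)) ⊆ st f t := by
    intro x hx
    simp only [Set.mem_Iic] at hx
    have hz : x - (a - t) ∈ st f a := hm (by simp only [Set.mem_Iic]; omega)
    obtain ⟨i, hi, hie⟩ := mem_st.mp hz
    have hit : i ≤ t := by
      by_contra h
      push_neg at h
      have hGmem : f i - a ∈ G := Finset.mem_image.mpr ⟨i, Finset.mem_Ioc.mpr ⟨h, hi⟩, rfl⟩
      have : μ ≤ f i - a := hμ ▸ Finset.min'_le (insert m G) (f i - a) (Finset.mem_insert_of_mem (b := m) hGmem)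
      omega
    exact mem_st.mpr ⟨i, hit, by omega⟩
  refine ⟨max (M + (a - t)) (-(μ - 1 + (a - t))), ?_, ?_⟩
  · intro x hx
    apply hlow
    simp only [Set.mem_Iic] at hx ⊢
    have := le_max_right (M + (a - t)) (-(μ - 1 + (a - t)))
    omega
  · intro x hx
    have h1 := hup hx
    simp only [Set.mem_Iic] at h1 ⊢
    have := le_max_left (M + (a - t)) (-(μ - 1 + (a - t)))
    omega

lemma uniform_bound (f : ℤ → ℤ) (hf : Function.Bijective f)
    (hfin : (Set.range (st f)).Finite) :
    ∃ B : ℤ, ∀ t : ℤ, Set.Iic (-B) ⊆ st f t ∧ st f t ⊆ Set.Iic B := by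
  classical
  let c : Set ℤ → ℤ := fun S =>
    if h : ∃ B : ℤ, Set.Iic (-B) ⊆ S ∧ S ⊆ Set.Iic B then h.choose else 0
  have hc : ∀ t : ℤ, Set.Iic (-(c (st f t))) ⊆ st f t ∧ st f t ⊆ Set.Iic (c (st f t)) := by
    intro t
    have h := per_t f hf hfin t
    simp only [c, dif_pos h]
    exact h.choose_spec
  obtain ⟨C, hC⟩ := (hfin.image c).bddAbove
  refine ⟨C, fun t => ?_⟩
  have hle : c (st f t) ≤ C := hC (Set.mem_image_of_mem c ⟨t, rfl⟩)
  exact ⟨(Set.Iic_subset_Iic.mpr (by omega)).trans (hc t).1,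
    (hc t).2.trans (Set.Iic_subset_Iic.mpr hle)⟩

theorem stmt_1 (f : ℤ → ℤ) (hf : Function.Bijective f) :
    ((∃ N : ℤ, ∀ i : ℤ, |f i - i| < N) ↔ (Set.range (st f)).Finite) ∧
    ((∃ N : ℤ, ∀ i : ℤ, |f i - i| < N) → IsJugglingFunction f) := by
  have fwd_sub : ∀ N : ℤ, (∀ i : ℤ, |f i - i| < N) →
      (∀ t, st f t ⊆ Set.Iio N) ∧ (∀ t, Set.Iic (-N) ⊆ st f t) := by
    intro N hN
    constructor
    · intro t x hx
      obtain ⟨i, hi, rfl⟩ := mem_st.mp hx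
      have := abs_lt.mp (hN i)
      simp only [Set.mem_Iio]
      omega
    · intro t x hx
      simp only [Set.mem_Iic] at hx
      obtain ⟨i, hie⟩ := hf.surjective (x + t)
      have := abs_lt.mp (hN i)
      exact mem_st.mpr ⟨i, by omega, by omega⟩
  constructor
  · constructor
    · rintro ⟨N, hN⟩
      obtain ⟨h1, h2⟩ := fwd_sub N hN
      apply Set.Finite.subset (((Set.finite_Ioo (-N) N).finite_subsets).image
        (fun A => Set.Iic (-N) ∪ A))
      rintro S ⟨t, rfl⟩
      refine ⟨st f t ∩ Set.Ioo (-N) N, fun x hx => hx.2, ?_⟩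
      ext x
      simp only [Set.mem_union, Set.mem_inter_iff, Set.mem_Iic, Set.mem_Ioo]
      constructor
      · rintro (hx | ⟨hx, _⟩)
        · exact h2 t hx
        · exact hx
      · intro hx
        by_cases hc : x ≤ -N
        · exact Or.inl hc
        · refine Or.inr ⟨hx, by omega, ?_⟩
          have := h1 t hx
          simpa [Set.mem_Iio] using this
    · intro hfin
      obtain ⟨B, hB⟩ := uniform_bound f hf hfin
      refine ⟨B + 1, fun i => ?_⟩
      have h1 : f i - i ∈ st f i := mem_st.mpr ⟨i, le_refl i, rfl⟩
      have h2 := (hB i).2 h1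
      simp only [Set.mem_Iic] at h2
      have h3 : f i - (i - 1) ∉ st f (i - 1) := by
        intro hmem
        obtain ⟨j, hj, hje⟩ := mem_st.mp hmem
        have hfij : f j = f i := by omega
        have := hf.injective hfij
        omega
      have h4 : ¬ (f i - (i - 1) ≤ -B) := by
        intro h
        exact h3 ((hB (i - 1)).1 (by simpa [Set.mem_Iic] using h))
      rw [abs_lt]
      omega
  · rintro ⟨N, hN⟩
    obtain ⟨h1, h2⟩ := fwd_sub N hN
    refine ⟨hf, ?_⟩
    have hNpos : 0 < N := lt_of_le_of_lt (abs_nonneg _) (hN 0)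
    have hst0 : f '' {i : ℤ | i ≤ 0} = st f 0 := by
      simp [st]
    rw [IsJugglingState, hst0]
    apply Set.Finite.subset (Set.finite_Ioo (-N) N)
    intro x hx
    rw [Set.mem_symmDiff] at hx
    simp only [Set.mem_setOf_eq, Set.mem_Ioo]
    rcases hx with ⟨hxS, hx0⟩ | ⟨hx0, hxS⟩
    · simp only [Set.mem_setOf_eq, not_le] at hx0
      have hlt := h1 0 hxS
      simp only [Set.mem_Iio] at hlt
      constructor
      · omega
      · exact hlt
    · simp only [Set.mem_setOf_eq] at hx0
      constructor
      · by_contra h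
        exact hxS (h2 0 (by simp only [Set.mem_Iic]; omega))
      · omega
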